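/- For each fixed c > 0, the function s ↦ g(c, s) is continuous on the interval [0, 1]. -/
import Mathlib


open MeasureTheory ProbabilityTheory

/-- The logistic sigmoid `S(t) = 1/(1 + exp(-t))`. -/
noncomputable def S (t : ℝ) : ℝ := 1 / (1 + Real.exp (-t))

/-- The standard Gaussian measure on `ℝ`. -/
noncomputable def γ : Measure ℝ := gaussianReal 0 1

/-- The validation mean `μᵥ(s) := √(2(1 - s²))`. -/
noncomputable def μv (s : ℝ) : ℝ := Real.sqrt (2 * (1 - s ^ 2))

/-- `g(c, s) := -E_Z[(S(c(μᵥ(s) + s Z)) - 1)(μᵥ(s) + s Z)]` for a standard Gaussian `Z`. -/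
noncomputable def g (c s : ℝ) : ℝ :=
  -∫ z, (S (c * (μv s + s * z)) - 1) * (μv s + s * z) ∂γ

/-- `σ₀(c) := sup { s ∈ [0,1] : g(c, s) ≥ 0 }`. -/
noncomputable def σ₀ (c : ℝ) : ℝ := sSup {s : ℝ | s ∈ Set.Icc (0 : ℝ) 1 ∧ 0 ≤ g c s}

lemma continuous_S : Continuous S := by
  apply continuous_const.div (continuous_const.add (Real.continuous_exp.comp continuous_neg))
  intro t
  have := Real.exp_pos (-t)
  show (1 : ℝ) + Real.exp (-t) ≠ 0
  positivity

lemma continuous_μv : Continuous μv :=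
  Real.continuous_sqrt.comp (by continuity)

lemma S_nonneg (t : ℝ) : 0 ≤ S t := by
  unfold S; positivity

lemma S_le_one (t : ℝ) : S t ≤ 1 := by
  unfold S
  rw [div_le_one (by positivity)]
  nlinarith [Real.exp_pos (-t)]

lemma integrable_bound : Integrable (fun z => Real.sqrt 2 + |z|) γ := by
  have h1 : (1 : NNReal) ≠ 0 := one_ne_zero
  rw [γ, gaussianReal_of_var_ne_zero _ h1,
    integrable_withDensity_iff (measurable_gaussianPDF 0 1)
      (Filter.Eventually.of_forall fun x => ENNReal.ofReal_lt_top)]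
  have htoReal : ∀ x : ℝ, (gaussianPDF 0 1 x).toReal = gaussianPDFReal 0 1 x := fun x =>
    ENNReal.toReal_ofReal (gaussianPDFReal_nonneg 0 1 x)
  simp only [htoReal]
  have hexp : Integrable (fun x : ℝ => Real.exp (-(1/2 : ℝ) * x ^ 2)) :=
    integrable_exp_neg_mul_sq (by norm_num)
  have hx : Integrable (fun x : ℝ => x * Real.exp (-(1/2 : ℝ) * x ^ 2)) := by
    have := integrable_rpow_mul_exp_neg_mul_sq (b := 1/2) (by norm_num) (s := 1) (by norm_num)
    simpa [Real.rpow_one] using this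
  have habs : Integrable (fun x : ℝ => |x| * Real.exp (-(1/2 : ℝ) * x ^ 2)) := by
    have := hx.abs
    refine this.congr (Filter.Eventually.of_forall fun x => ?_)
    simp [abs_mul, abs_of_nonneg (Real.exp_pos _).le]
  have key : Integrable
      (fun x : ℝ => (Real.sqrt (2 * Real.pi * (1:NNReal)))⁻¹ *
        ((Real.sqrt 2) * Real.exp (-(1/2 : ℝ) * x ^ 2) + |x| * Real.exp (-(1/2 : ℝ) * x ^ 2))) :=
    ((hexp.const_mul _).add habs).const_mul _
  refine key.congr (Filter.Eventually.of_forall fun x => ?_)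
  unfold gaussianPDFReal
  push_cast
  rw [show (- (x - 0)^2 / (2 * (1:ℝ))) = (-(1/2 : ℝ) * x ^ 2) by ring]
  ring

/-- For each fixed `c > 0`, the function `s ↦ g(c, s)` is continuous on `[0, 1]`. -/
theorem stmt12 (c : ℝ) (hc : 0 < c) : ContinuousOn (fun s => g c s) (Set.Icc 0 1) := by
  have hcont : ContinuousOn
      (fun s => ∫ z, (S (c * (μv s + s * z)) - 1) * (μv s + s * z) ∂γ) (Set.Icc 0 1) := by
    intro s₀ hs₀
    apply continuousWithinAt_of_dominated (bound := fun z => Real.sqrt 2 + |z|)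
    · refine Filter.Eventually.of_forall fun s => ?_
      exact (((continuous_S.comp (by fun_prop)).sub continuous_const).mul
        (by fun_prop)).aestronglyMeasurable
    · filter_upwards [self_mem_nhdsWithin] with s hs
      refine Filter.Eventually.of_forall fun z => ?_
      obtain ⟨hs0, hs1⟩ := hs
      have hS : |S (c * (μv s + s * z)) - 1| ≤ 1 := by
        have := S_nonneg (c * (μv s + s * z))
        have := S_le_one (c * (μv s + s * z))
        rw [abs_le]; constructor <;> linarith
      have hμ : |μv s| ≤ Real.sqrt 2 := by
        have h0 : (0:ℝ) ≤ μv s := Real.sqrt_nonneg _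
        rw [abs_of_nonneg h0]
        unfold μv
        apply Real.sqrt_le_sqrt
        nlinarith
      have hsz : |s * z| ≤ |z| := by
        rw [abs_mul]
        have : |s| ≤ 1 := by rw [abs_of_nonneg hs0]; exact hs1
        nlinarith [abs_nonneg z]
      calc ‖(S (c * (μv s + s * z)) - 1) * (μv s + s * z)‖
          = |S (c * (μv s + s * z)) - 1| * |μv s + s * z| := by
            rw [Real.norm_eq_abs, abs_mul]
        _ ≤ 1 * (Real.sqrt 2 + |z|) := by
            apply mul_le_mul hS ?_ (abs_nonneg _) zero_le_one
            calc |μv s + s * z| ≤ |μv s| + |s * z| := abs_add_le _ _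
              _ ≤ Real.sqrt 2 + |z| := add_le_add hμ hsz
        _ = Real.sqrt 2 + |z| := one_mul _
    · exact integrable_bound
    · refine Filter.Eventually.of_forall fun z => ?_
      apply Continuous.continuousWithinAt
      have h1 : Continuous fun s : ℝ => μv s + s * z :=
        continuous_μv.add (continuous_id.mul continuous_const)
      exact ((continuous_S.comp (continuous_const.mul h1)).sub continuous_const).mul h1
  exact hcont.neg
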